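/- Let g be the ADM 4-metric built from lapse N > 0, shift N_k ∈ ℝ³ and positive-definite symmetric 3×3 matrix q. Let h > 0, let Z be a real 3×4 matrix with invertible spatial block (Z_{ak}), let j^μ = h ε^{μνρσ} Z_{1ν} Z_{2ρ} Z_{3σ} with jᵀ g j < 0, set n = √(−jᵀ g j)/√(−det g), u^μ = j^μ/(√(−det g) n), and u_k = Σ_μ g_{kμ} u^μ for k ∈ {1,2,3}. Let ρ' ≠ 0 and define p_a = −√(−det g) ρ' ∂n/∂Z_{a0}. Then for each spatial index k: Σ_a p_a Z_{ak} = − ρ' j⁰ u_k, equivalently u_k = − (Σ_a p_a Z_{ak})/(ρ' j⁰). -/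

import Mathlib

open scoped BigOperators

/-- The totally antisymmetric Levi-Civita symbol on four indices, with `eps 0 1 2 3 = 1`,
realized as the determinant of the matrix whose `i`-th row is the standard basis vector
indexed by the `i`-th argument. -/
noncomputable def eps (μ ν ρ σ : Fin 4) : ℝ :=
  Matrix.det (Matrix.of fun i j => if ![μ, ν, ρ, σ] i = j then (1 : ℝ) else 0)

/-- The mole current `j^μ = h ε^{μνρσ} Z_{1ν} Z_{2ρ} Z_{3σ}` built from the constant `h`
and the 3×4 Jacobian matrix `Z` (rows indexed by `Fin 3`). -/
noncomputable def Jcur (h : ℝ) (Z : Matrix (Fin 3) (Fin 4) ℝ) (μ : Fin 4) : ℝ :=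
  h * ∑ ν, ∑ ρ, ∑ σ, eps μ ν ρ σ * Z 0 ν * Z 1 ρ * Z 2 σ

/-- The rest mole density `n(g) = √(−Σ g_{μν} j^μ j^ν)/√(−det g)`. -/
noncomputable def nOf (j : Fin 4 → ℝ) (g : Matrix (Fin 4) (Fin 4) ℝ) : ℝ :=
  Real.sqrt (-(∑ μ, ∑ ν, g μ ν * j μ * j ν)) / Real.sqrt (-g.det)

/-- The four-velocity `u^μ = j^μ/(√(−det g) n(g))`. -/
noncomputable def uOf (j : Fin 4 → ℝ) (g : Matrix (Fin 4) (Fin 4) ℝ) (μ : Fin 4) : ℝ :=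
  j μ / (Real.sqrt (-g.det) * nOf j g)

/-- The ADM 4-metric built from a lapse `N`, a shift covector `Nk` and a spatial metric `q`:
`g₀₀ = −N² + Σ q^{kl} N_k N_l`, `g₀k = g_{k0} = N_k`, `g_{kl} = q_{kl}`.
The spatial index `k ∈ {1,2,3}` is realized as `Fin.succ k` for `k : Fin 3`. -/
noncomputable def ADM (N : ℝ) (Nk : Fin 3 → ℝ) (q : Matrix (Fin 3) (Fin 3) ℝ) :
    Matrix (Fin 4) (Fin 4) ℝ :=
  Matrix.of fun μ ν =>
    Fin.cases (motive := fun _ => ℝ)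
      (Fin.cases (motive := fun _ => ℝ)
        (-N ^ 2 + ∑ k, ∑ l, q⁻¹ k l * Nk k * Nk l) (fun l => Nk l) ν)
      (fun k => Fin.cases (motive := fun _ => ℝ) (Nk k) (fun l => q k l) ν) μ

/-! ### Auxiliary definitions and lemmas -/

/-- Direction vector: the current built from `Z` with row `a` replaced by `e₀`. -/
noncomputable def dvec (h : ℝ) (Z : Matrix (Fin 3) (Fin 4) ℝ) (a : Fin 3) : Fin 4 → ℝ :=
  Jcur h (Z.updateRow a (fun μ => if μ = 0 then 1 else 0))

private lemma fs2 : (Fin.succ 2 : Fin 4) = 3 := rfl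
private lemma fs1 : (Fin.succ 1 : Fin 4) = 2 := rfl
private lemma fs0 : (Fin.succ 0 : Fin 4) = 1 := rfl
private lemma fm0 (p : 0 < 4) : (⟨0, p⟩ : Fin 4) = 0 := rfl
private lemma fm1 (p : 1 < 4) : (⟨1, p⟩ : Fin 4) = 1 := rfl
private lemma fm2 (p : 2 < 4) : (⟨2, p⟩ : Fin 4) = 2 := rfl
private lemma fm3 (p : 3 < 4) : (⟨3, p⟩ : Fin 4) = 3 := rfl
private lemma fm0' (p : 0 < 3) : (⟨0, p⟩ : Fin 3) = 0 := rfl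
private lemma fm1' (p : 1 < 3) : (⟨1, p⟩ : Fin 3) = 1 := rfl
private lemma fm2' (p : 2 < 3) : (⟨2, p⟩ : Fin 3) = 2 := rfl

set_option maxHeartbeats 1000000 in
private lemma Jcur_zero (h : ℝ) (Z : Matrix (Fin 3) (Fin 4) ℝ) : Jcur h Z 0 =
    h * (Z 0 1 * (Z 1 2 * Z 2 3 - Z 1 3 * Z 2 2) - Z 0 2 * (Z 1 1 * Z 2 3 - Z 1 3 * Z 2 1)
      + Z 0 3 * (Z 1 1 * Z 2 2 - Z 1 2 * Z 2 1)) := by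
  rw [Jcur]
  congr 1
  simp (config := {decide := true}) [eps, Fin.sum_univ_four,
    Matrix.det_succ_row_zero, Fin.sum_univ_succ, Matrix.det_fin_three, fs2, fs1, fs0]
  ring

set_option maxHeartbeats 1000000 in
private lemma Jcur_one (h : ℝ) (Z : Matrix (Fin 3) (Fin 4) ℝ) : Jcur h Z 1 =
    -h * (Z 0 0 * (Z 1 2 * Z 2 3 - Z 1 3 * Z 2 2) - Z 0 2 * (Z 1 0 * Z 2 3 - Z 1 3 * Z 2 0)
      + Z 0 3 * (Z 1 0 * Z 2 2 - Z 1 2 * Z 2 0)) := by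
  rw [Jcur, show (-h : ℝ) * (Z 0 0 * (Z 1 2 * Z 2 3 - Z 1 3 * Z 2 2)
        - Z 0 2 * (Z 1 0 * Z 2 3 - Z 1 3 * Z 2 0)
        + Z 0 3 * (Z 1 0 * Z 2 2 - Z 1 2 * Z 2 0))
      = h * -(Z 0 0 * (Z 1 2 * Z 2 3 - Z 1 3 * Z 2 2)
        - Z 0 2 * (Z 1 0 * Z 2 3 - Z 1 3 * Z 2 0)
        + Z 0 3 * (Z 1 0 * Z 2 2 - Z 1 2 * Z 2 0)) from by ring]
  congr 1
  simp (config := {decide := true}) [eps, Fin.sum_univ_four,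
    Matrix.det_succ_row_zero, Fin.sum_univ_succ, Matrix.det_fin_three, fs2, fs1, fs0]
  ring

set_option maxHeartbeats 1000000 in
private lemma Jcur_two (h : ℝ) (Z : Matrix (Fin 3) (Fin 4) ℝ) : Jcur h Z 2 =
    h * (Z 0 0 * (Z 1 1 * Z 2 3 - Z 1 3 * Z 2 1) - Z 0 1 * (Z 1 0 * Z 2 3 - Z 1 3 * Z 2 0)
      + Z 0 3 * (Z 1 0 * Z 2 1 - Z 1 1 * Z 2 0)) := by
  rw [Jcur]
  congr 1
  simp (config := {decide := true}) [eps, Fin.sum_univ_four,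
    Matrix.det_succ_row_zero, Fin.sum_univ_succ, Matrix.det_fin_three, fs2, fs1, fs0]
  ring

set_option maxHeartbeats 1000000 in
private lemma Jcur_three (h : ℝ) (Z : Matrix (Fin 3) (Fin 4) ℝ) : Jcur h Z 3 =
    -h * (Z 0 0 * (Z 1 1 * Z 2 2 - Z 1 2 * Z 2 1) - Z 0 1 * (Z 1 0 * Z 2 2 - Z 1 2 * Z 2 0)
      + Z 0 2 * (Z 1 0 * Z 2 1 - Z 1 1 * Z 2 0)) := by
  rw [Jcur, show (-h : ℝ) * (Z 0 0 * (Z 1 1 * Z 2 2 - Z 1 2 * Z 2 1)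
        - Z 0 1 * (Z 1 0 * Z 2 2 - Z 1 2 * Z 2 0)
        + Z 0 2 * (Z 1 0 * Z 2 1 - Z 1 1 * Z 2 0))
      = h * -(Z 0 0 * (Z 1 1 * Z 2 2 - Z 1 2 * Z 2 1)
        - Z 0 1 * (Z 1 0 * Z 2 2 - Z 1 2 * Z 2 0)
        + Z 0 2 * (Z 1 0 * Z 2 1 - Z 1 1 * Z 2 0)) from by ring]
  congr 1
  simp (config := {decide := true}) [eps, Fin.sum_univ_four,
    Matrix.det_succ_row_zero, Fin.sum_univ_succ, Matrix.det_fin_three, fs2, fs1, fs0]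
  ring

set_option maxHeartbeats 2000000 in
private lemma key_contract (h : ℝ) (Z : Matrix (Fin 3) (Fin 4) ℝ) (k : Fin 3) (ν : Fin 4) :
    ∑ a, dvec h Z a ν * Z a k.succ = -(if ν = k.succ then Jcur h Z 0 else 0) := by
  fin_cases k <;> fin_cases ν <;>
    simp (config := {decide := true}) only [dvec, Fin.sum_univ_three, fm0, fm1, fm2, fm3,
      fm0', fm1', fm2', fs0, fs1, fs2, Jcur_zero, Jcur_one, Jcur_two, Jcur_three,
      Matrix.updateRow_apply, Fin.isValue, if_true, if_false, reduceIte] <;>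
    norm_num <;> ring

set_option maxHeartbeats 1000000 in
private lemma Jcur_affine (h t : ℝ) (Z : Matrix (Fin 3) (Fin 4) ℝ) (a : Fin 3) (μ : Fin 4) :
    Jcur h (Z + t • Matrix.single a 0 (1 : ℝ)) μ = Jcur h Z μ + t * dvec h Z a μ := by
  fin_cases a <;>
    simp (config := {decide := true}) only [Jcur, dvec, Fin.sum_univ_four, Matrix.add_apply,
      Matrix.smul_apply, Matrix.single, Matrix.updateRow_apply, smul_eq_mul,
      Matrix.of_apply, if_true, if_false, mul_one, mul_zero, add_zero, and_self, and_true,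
      true_and, and_false, false_and, if_neg, if_pos] <;>
    ring

private lemma sum_expand (g : Matrix (Fin 4) (Fin 4) ℝ) (j d : Fin 4 → ℝ) (t : ℝ) :
    ∑ μ, ∑ ν, g μ ν * (j μ + t * d μ) * (j ν + t * d ν)
      = (∑ μ, ∑ ν, g μ ν * j μ * j ν)
        + t * (∑ μ, ∑ ν, g μ ν * (d μ * j ν + j μ * d ν))
        + t ^ 2 * (∑ μ, ∑ ν, g μ ν * d μ * d ν) := by
  simp only [Fin.sum_univ_four]; ring

private def finE : Fin 4 ≃ (Fin 1 ⊕ Fin 3) where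
  toFun := Fin.cases (Sum.inl 0) Sum.inr
  invFun := Sum.elim (fun _ => 0) Fin.succ
  left_inv := by intro μ; induction μ using Fin.cases <;> simp
  right_inv := by rintro (x | x) <;> simp [Fin.eq_zero]

private lemma ADM_symm (N : ℝ) (Nk : Fin 3 → ℝ) (q : Matrix (Fin 3) (Fin 3) ℝ)
    (hq : q.PosDef) (μ ν : Fin 4) : ADM N Nk q μ ν = ADM N Nk q ν μ := by
  have hs : ∀ i j, q i j = q j i := fun i j => (congrFun (congrFun hq.isHermitian i) j).symm
  induction μ using Fin.cases <;> induction ν using Fin.cases <;>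
    simp [ADM, hs]

private lemma ADM_eq_blocks (N : ℝ) (Nk : Fin 3 → ℝ) (q : Matrix (Fin 3) (Fin 3) ℝ) :
    ADM N Nk q = (Matrix.fromBlocks
      (Matrix.of fun _ _ : Fin 1 => -N ^ 2 + ∑ k, ∑ l, q⁻¹ k l * Nk k * Nk l)
      (Matrix.of fun _ l => Nk l) (Matrix.of fun k _ => Nk k) q).submatrix finE finE := by
  ext μ ν
  induction μ using Fin.cases <;> induction ν using Fin.cases <;>
    simp [ADM, finE, Matrix.fromBlocks]

private lemma ADM_det (N : ℝ) (Nk : Fin 3 → ℝ) (q : Matrix (Fin 3) (Fin 3) ℝ)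
    (hq : q.PosDef) : (ADM N Nk q).det = -N ^ 2 * q.det := by
  haveI : Invertible q := hq.isUnit.invertible
  rw [ADM_eq_blocks, Matrix.det_submatrix_equiv_self, Matrix.det_fromBlocks₂₂]
  have hinv : (⅟q : Matrix (Fin 3) (Fin 3) ℝ) = q⁻¹ := Matrix.invOf_eq_nonsing_inv q
  rw [Matrix.det_fin_one]
  simp only [Matrix.sub_apply, Matrix.of_apply, Matrix.mul_apply, hinv]
  have hswap : ∑ k, ∑ l, q⁻¹ k l * Nk k * Nk l = ∑ j, (∑ i, Nk i * q⁻¹ i j) * Nk j := by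
    rw [Finset.sum_comm]
    refine Finset.sum_congr rfl fun j _ => ?_
    rw [Finset.sum_mul]
    exact Finset.sum_congr rfl fun i _ => by ring
  rw [hswap]
  ring

private lemma deriv_aux (Q S T c : ℝ) (hQ : Q < 0) :
    deriv (fun t : ℝ => Real.sqrt (-(Q + t * S + t ^ 2 * T)) / c) 0
      = -S / (2 * Real.sqrt (-Q)) / c := by
  have h1 : HasDerivAt (fun t : ℝ => -(Q + t * S + t ^ 2 * T)) (-S) 0 := by
    have h2 : HasDerivAt (fun t : ℝ => t * S) S 0 := by
      simpa using (hasDerivAt_id (0 : ℝ)).mul_const S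
    have h3 : HasDerivAt (fun t : ℝ => t ^ 2 * T) 0 0 := by
      simpa using (hasDerivAt_pow 2 (0 : ℝ)).mul_const T
    have ha : HasDerivAt (fun t : ℝ => Q + t * S + t ^ 2 * T) S 0 := by
      have := ((hasDerivAt_const (0 : ℝ) Q).add h2).add h3
      rw [zero_add, add_zero] at this
      exact this
    exact ha.neg
  have hx : (fun t : ℝ => -(Q + t * S + t ^ 2 * T)) 0 ≠ 0 := by
    norm_num; linarith
  have h4 := ((h1.sqrt hx).div_const c).deriv
  exact h4.trans (by norm_num)

set_option maxHeartbeats 2000000 in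
private lemma key_sum (g : Matrix (Fin 4) (Fin 4) ℝ) (h : ℝ)
    (Z : Matrix (Fin 3) (Fin 4) ℝ) (k : Fin 3) :
    ∑ a, (∑ μ, ∑ ν, g μ ν * (dvec h Z a μ * Jcur h Z ν + Jcur h Z μ * dvec h Z a ν))
        * Z a k.succ
      = -(Jcur h Z 0) * ((∑ ν, g k.succ ν * Jcur h Z ν) + (∑ μ, g μ k.succ * Jcur h Z μ)) := by
  have hK := key_contract h Z k
  have hK0 := hK 0
  have hK1 := hK 1
  have hK2 := hK 2
  have hK3 := hK 3
  clear hK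
  fin_cases k <;>
  · simp (config := {decide := true}) only [fs0, fs1, fs2, fm0, fm1, fm2, fm3, fm0', fm1',
      fm2', Fin.isValue, if_true, if_false, reduceIte] at hK0 hK1 hK2 hK3 ⊢
    simp only [Fin.sum_univ_four, Fin.sum_univ_three] at hK0 hK1 hK2 hK3 ⊢
    linear_combination
      hK0 * ((g 0 0 + g 0 0) * Jcur h Z 0 + (g 0 1 + g 1 0) * Jcur h Z 1
        + (g 0 2 + g 2 0) * Jcur h Z 2 + (g 0 3 + g 3 0) * Jcur h Z 3)
      + hK1 * ((g 1 0 + g 0 1) * Jcur h Z 0 + (g 1 1 + g 1 1) * Jcur h Z 1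
        + (g 1 2 + g 2 1) * Jcur h Z 2 + (g 1 3 + g 3 1) * Jcur h Z 3)
      + hK2 * ((g 2 0 + g 0 2) * Jcur h Z 0 + (g 2 1 + g 1 2) * Jcur h Z 1
        + (g 2 2 + g 2 2) * Jcur h Z 2 + (g 2 3 + g 3 2) * Jcur h Z 3)
      + hK3 * ((g 3 0 + g 0 3) * Jcur h Z 0 + (g 3 1 + g 1 3) * Jcur h Z 1
        + (g 3 2 + g 2 3) * Jcur h Z 2 + (g 3 3 + g 3 3) * Jcur h Z 3)

/-- Expression of the covariant spatial velocity through the canonical momenta: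
`Σ_a p_a Z_{ak} = −ρ' j⁰ u_k`, where `u_k = Σ_μ g_{kμ} u^μ` and the momenta are
`p_a = −√(−det g) ρ' ∂n/∂Z_{a0}` (derivative of `n` with respect to the time column of `Z`
at fixed ADM metric `g`). -/
theorem momenta_determine_covariant_velocity (N : ℝ) (hN : 0 < N) (Nk : Fin 3 → ℝ)
    (q : Matrix (Fin 3) (Fin 3) ℝ) (hq : q.PosDef)
    (h : ℝ) (hh : 0 < h) (Z : Matrix (Fin 3) (Fin 4) ℝ)
    (hB : IsUnit (Matrix.of fun a k : Fin 3 => Z a k.succ).det)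
    (htl : ∑ μ, ∑ ν, ADM N Nk q μ ν * Jcur h Z μ * Jcur h Z ν < 0)
    (ρ' : ℝ) (hρ' : ρ' ≠ 0)
    (p : Fin 3 → ℝ)
    (hp : ∀ a, p a = -Real.sqrt (-(ADM N Nk q).det) * ρ' *
        deriv (fun t : ℝ =>
          nOf (Jcur h (Z + t • Matrix.single a 0 (1 : ℝ))) (ADM N Nk q)) 0) :
    ∀ k : Fin 3,
      ∑ a, p a * Z a k.succ
        = -ρ' * Jcur h Z 0 *
            ∑ μ, ADM N Nk q k.succ μ * uOf (Jcur h Z) (ADM N Nk q) μ := by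
  intro k
  set g := ADM N Nk q with hgdef
  have hgsymm : ∀ μ ν, g μ ν = g ν μ := ADM_symm N Nk q hq
  have hdet : g.det = -N ^ 2 * q.det := ADM_det N Nk q hq
  have hdetpos : 0 < -g.det := by
    rw [hdet]
    linarith [mul_pos (pow_pos hN 2) hq.det_pos]
  set c := Real.sqrt (-g.det) with hcdef
  have hcpos : 0 < c := Real.sqrt_pos.mpr hdetpos
  have hc0 : c ≠ 0 := ne_of_gt hcpos
  set Q := ∑ μ, ∑ ν, g μ ν * Jcur h Z μ * Jcur h Z ν with hQdef
  have hQneg : Q < 0 := htl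
  set s := Real.sqrt (-Q) with hsdef
  have hspos : 0 < s := Real.sqrt_pos.mpr (by linarith)
  have hs0 : s ≠ 0 := ne_of_gt hspos
  have hnof : nOf (Jcur h Z) g = s / c := rfl
  have hu : ∀ μ, uOf (Jcur h Z) g μ = Jcur h Z μ / s := by
    intro μ
    have : c * (s / c) = s := by field_simp
    rw [uOf, ← hcdef, hnof, this]
  have hp' : ∀ a, p a = ρ' * (∑ μ, ∑ ν, g μ ν *
      (dvec h Z a μ * Jcur h Z ν + Jcur h Z μ * dvec h Z a ν)) / (2 * s) := by
    intro a
    have hfun : (fun t : ℝ => nOf (Jcur h (Z + t • Matrix.single a 0 (1 : ℝ))) g)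
        = fun t => Real.sqrt (-(Q
            + t * (∑ μ, ∑ ν, g μ ν * (dvec h Z a μ * Jcur h Z ν + Jcur h Z μ * dvec h Z a ν))
            + t ^ 2 * (∑ μ, ∑ ν, g μ ν * dvec h Z a μ * dvec h Z a ν))) / c := by
      funext t
      have hQt : (∑ μ, ∑ ν, g μ ν * Jcur h (Z + t • Matrix.single a 0 (1 : ℝ)) μ
            * Jcur h (Z + t • Matrix.single a 0 (1 : ℝ)) ν)
          = Q + t * (∑ μ, ∑ ν, g μ ν *
              (dvec h Z a μ * Jcur h Z ν + Jcur h Z μ * dvec h Z a ν))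
            + t ^ 2 * (∑ μ, ∑ ν, g μ ν * dvec h Z a μ * dvec h Z a ν) := by
        simp only [Jcur_affine]
        rw [hQdef]
        exact sum_expand g (Jcur h Z) (dvec h Z a) t
      simp only [nOf, hQt, ← hcdef]
    rw [hp a, hfun, deriv_aux _ _ _ _ hQneg, ← hsdef]
    field_simp
  have hkey := key_sum g h Z k
  have hsum1 : ∑ a, p a * Z a k.succ
      = ρ' * (∑ a, (∑ μ, ∑ ν, g μ ν *
          (dvec h Z a μ * Jcur h Z ν + Jcur h Z μ * dvec h Z a ν)) * Z a k.succ) / (2 * s) := by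
    rw [Finset.mul_sum, Finset.sum_div]
    exact Finset.sum_congr rfl fun a _ => by rw [hp' a]; ring
  have hsymmsum : (∑ μ, g μ k.succ * Jcur h Z μ) = ∑ μ, g k.succ μ * Jcur h Z μ :=
    Finset.sum_congr rfl fun μ _ => by rw [hgsymm μ k.succ]
  have husum : (∑ μ, g k.succ μ * uOf (Jcur h Z) g μ)
      = (∑ μ, g k.succ μ * Jcur h Z μ) / s := by
    rw [Finset.sum_div]
    exact Finset.sum_congr rfl fun μ _ => by rw [hu μ]; ring
  rw [hsum1, hkey, hsymmsum, husum]
  field_simp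
  ring
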